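/- Let X be a finite set and p a probability distribution on X. For even n, define the duplicated distribution p̃_n on X^n by p̃_n(x₁,…,x_n) = ∏_{j odd, 1≤j≤n−1} p(x_j)·1[x_{j+1} = x_j]. Then for every fixed k ≥ 1 and every even n with n > 2k, binom(n,k)^{−1} Σ_{I⊆[n], |I|=k} ‖(p̃_n)_I − p^{×k}‖₁ ≤ 2·(1 − ∏_{j=1}^{k} (n−2j)/n); in particular, for every fixed k the left-hand side tends to 0 as n → ∞ along even n, so the duplicated source is weakly almost i.i.d. along p. -/

import Mathlib

open scoped BigOperators ComplexOrder
open Filter Matrix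

noncomputable section

namespace AlmostIID

/-- The trace norm `‖A‖₁ = Tr √(A†A)` of a square complex matrix. -/
def traceNorm {m : Type*} [Fintype m] [DecidableEq m] (A : Matrix m m ℂ) : ℝ :=
  (((Matrix.posSemidef_conjTranspose_mul_self A).1.eigenvectorUnitary.1 *
      Matrix.diagonal (((↑) : ℝ → ℂ) ∘ Real.sqrt ∘ (Matrix.posSemidef_conjTranspose_mul_self A).1.eigenvalues) *
      (star (Matrix.posSemidef_conjTranspose_mul_self A).1.eigenvectorUnitary : Matrix m m ℂ)).trace).re

/-- A density matrix (state): positive semidefinite with unit trace. -/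
def IsState {m : Type*} [Fintype m] (M : Matrix m m ℂ) : Prop :=
  M.PosSemidef ∧ M.trace = 1

/-- The marginal (reduced density matrix) of an `n`-partite operator on the
coordinates in `I`, i.e. the partial trace over the complement of `I`. -/
def marginal {κ : Type*} [Fintype κ] {n : ℕ}
    (M : Matrix (Fin n → κ) (Fin n → κ) ℂ) (I : Finset (Fin n)) :
    Matrix ({i : Fin n // i ∈ I} → κ) ({i : Fin n // i ∈ I} → κ) ℂ :=
  fun a b => ∑ f : {i : Fin n // i ∉ I} → κ,
    M (fun i => if h : i ∈ I then a ⟨i, h⟩ else f ⟨i, h⟩)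
      (fun i => if h : i ∈ I then b ⟨i, h⟩ else f ⟨i, h⟩)

/-- The single-site reduced density matrix on the `i`-th tensor factor. -/
def siteMarginal {κ : Type*} [Fintype κ] {n : ℕ}
    (M : Matrix (Fin n → κ) (Fin n → κ) ℂ) (i : Fin n) : Matrix κ κ ℂ :=
  fun a b => ∑ f : {j : Fin n // j ≠ i} → κ,
    M (fun j => if h : j = i then a else f ⟨j, h⟩)
      (fun j => if h : j = i then b else f ⟨j, h⟩)

/-- The i.i.d. product state `ρ^{⊗ι}` on the tensor factors indexed by `ι`. -/
def iidOn {κ : Type*} (ι : Type*) [Fintype ι] (ρ : Matrix κ κ ℂ) :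
    Matrix (ι → κ) (ι → κ) ℂ :=
  fun a b => ∏ i, ρ (a i) (b i)

/-- The product state `φ 0 ⊗ φ 1 ⊗ ⋯`. -/
def prodState {κ : Type*} {ι : Type*} [Fintype ι] (φ : ι → Matrix κ κ ℂ) :
    Matrix (ι → κ) (ι → κ) ℂ :=
  fun a b => ∏ i, φ i (a i) (b i)

/-- The quantum Wasserstein norm of order 1 of a difference of states:
the minimum of `Σ cᵢ` over decompositions `X = Σ cᵢ (τ⁽ⁱ⁾ − η⁽ⁱ⁾)` with `cᵢ ≥ 0`,
`τ⁽ⁱ⁾, η⁽ⁱ⁾` states with equal partial traces over the `i`-th factor. -/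
def W1 {κ : Type*} [Fintype κ] [DecidableEq κ] {n : ℕ}
    (X : Matrix (Fin n → κ) (Fin n → κ) ℂ) : ℝ :=
  sInf { w : ℝ |
    ∃ (c : Fin n → ℝ) (τ η : Fin n → Matrix (Fin n → κ) (Fin n → κ) ℂ),
      (∀ i, 0 ≤ c i) ∧ (∀ i, IsState (τ i)) ∧ (∀ i, IsState (η i)) ∧
      (∀ i, marginal (τ i) ({i}ᶜ : Finset (Fin n)) = marginal (η i) ({i}ᶜ : Finset (Fin n))) ∧
      X = ∑ i, c i • (τ i - η i) ∧ w = ∑ i, c i }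

/-- The local variation norm. -/
def LV {κ : Type*} [Fintype κ] [DecidableEq κ] {n : ℕ}
    (X : Matrix (Fin n → κ) (Fin n → κ) ℂ) : ℝ :=
  (1/2) * ∑ k ∈ Finset.Icc 1 n, ((2:ℝ)^k)⁻¹ *
    (((n.choose k : ℝ))⁻¹ *
      ∑ I ∈ Finset.powersetCard k (Finset.univ : Finset (Fin n)),
        traceNorm (marginal X I))


/-- The marginal of a probability distribution on `X^n` on the coordinates in `I`. -/
def cMarginal {X : Type*} [Fintype X] {n : ℕ} (P : (Fin n → X) → ℝ) (I : Finset (Fin n)) :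
    ({i : Fin n // i ∈ I} → X) → ℝ :=
  fun a => ∑ f : {i : Fin n // i ∉ I} → X,
    P (fun i => if h : i ∈ I then a ⟨i, h⟩ else f ⟨i, h⟩)

/-- The i.i.d. distribution `p^{×ι}` on `X^ι`. -/
def cIID {X : Type*} (ι : Type*) [Fintype ι] (p : X → ℝ) : (ι → X) → ℝ :=
  fun a => ∏ i, p (a i)

/-- The duplicated distribution `p̃ₙ` on `Xⁿ` (for even `n`): odd-position symbols are
drawn i.i.d. from `p` and each even-position symbol copies its predecessor. -/
def dupDist {X : Type*} [DecidableEq X] (p : X → ℝ) (n : ℕ) : (Fin n → X) → ℝ :=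
  fun x => ∏ i : Fin (n / 2),
    p (x ⟨2 * i.val, by have := i.isLt; omega⟩) *
      (if x ⟨2 * i.val + 1, by have := i.isLt; omega⟩
          = x ⟨2 * i.val, by have := i.isLt; omega⟩ then 1 else 0)

set_option linter.unusedSectionVars false

section Aux
variable {X : Type*} [Fintype X] [DecidableEq X]

def pos0 {n : ℕ} (m : Fin (n/2)) : Fin n := ⟨2*m.val, by have := m.isLt; omega⟩
def pos1 {n : ℕ} (m : Fin (n/2)) : Fin n := ⟨2*m.val+1, by have := m.isLt; omega⟩
def posB {n : ℕ} (m : Fin (n/2)) (b : Bool) : Fin n :=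
  ⟨2*m.val + (if b then 1 else 0), by have := m.isLt; split <;> omega⟩
def halfF {n : ℕ} (hn : n % 2 = 0) (j : Fin n) : Fin (n/2) :=
  ⟨j.val/2, by have := j.isLt; omega⟩

def dupFun {n : ℕ} (hn : n % 2 = 0) (g : Fin (n/2) → X) : Fin n → X :=
  fun j => g (halfF hn j)

lemma halfF_pos0 {n : ℕ} (hn : n % 2 = 0) (m : Fin (n/2)) : halfF hn (pos0 m) = m := by
  apply Fin.ext; simp only [halfF, pos0]; omega

lemma halfF_pos1 {n : ℕ} (hn : n % 2 = 0) (m : Fin (n/2)) : halfF hn (pos1 m) = m := by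
  apply Fin.ext; simp only [halfF, pos1]; omega

lemma dupDist_eq (p : X → ℝ) (n : ℕ) (x : Fin n → X) :
    dupDist p n x = (∏ m : Fin (n/2), p (x (pos0 m))) *
      (if ∀ m : Fin (n/2), x (pos1 m) = x (pos0 m) then 1 else 0) := by
  unfold dupDist pos0 pos1
  rw [Finset.prod_mul_distrib, Finset.prod_boole]
  simp

lemma dupRepr {n : ℕ} (hn : n % 2 = 0) (p : X → ℝ) (x : Fin n → X) :
    dupDist p n x
      = ∑ g : Fin (n/2) → X, (∏ m, p (g m)) * (if x = dupFun hn g then 1 else 0) := by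
  rw [Finset.sum_eq_single (fun m => x (pos0 m))]
  · rw [dupDist_eq]
    have hcond : (x = dupFun hn fun m => x (pos0 m)) ↔ ∀ m, x (pos1 m) = x (pos0 m) := by
      constructor
      · intro hx m
        conv_lhs => rw [hx]
        simp [dupFun, halfF_pos1, halfF_pos0]
      · intro hall
        funext j
        have hj : j = pos0 (halfF hn j) ∨ j = pos1 (halfF hn j) := by
          have := j.isLt
          rcases Nat.mod_two_eq_zero_or_one j.val with h2 | h2
          · left; apply Fin.ext; simp only [pos0, halfF]; omega
          · right; apply Fin.ext; simp only [pos1, halfF]; omega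
        rcases hj with hj | hj
        · conv_lhs => rw [hj]
          rfl
        · conv_lhs => rw [hj]
          rw [hall (halfF hn j)]
          rfl
    simp only [hcond]
  · intro g _ hne
    rw [if_neg, mul_zero]
    intro hx
    exact hne (funext fun m => by rw [hx]; simp [dupFun, halfF_pos0])
  · simp


lemma sum_pi_prod {ι : Type*} [Fintype ι] [DecidableEq ι] (p : X → ℝ) (hp1 : ∑ x, p x = 1) :
    ∑ g : ι → X, ∏ i, p (g i) = 1 := by
  rw [← Fintype.piFinset_univ, ← Finset.prod_univ_sum]
  simp [hp1]

lemma sum_cIID {ι : Type*} [Fintype ι] [DecidableEq ι] (p : X → ℝ) (hp1 : ∑ x, p x = 1) :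
    ∑ a : ι → X, cIID ι p a = 1 := sum_pi_prod p hp1

lemma cIID_nonneg {ι : Type*} [Fintype ι] (p : X → ℝ) (hp0 : ∀ x, 0 ≤ p x) (a : ι → X) :
    0 ≤ cIID ι p a := Finset.prod_nonneg fun i _ => hp0 _

lemma sum_cMarginal {n : ℕ} (P : (Fin n → X) → ℝ) (I : Finset (Fin n))
    (hP : ∑ x, P x = 1) : ∑ a, cMarginal P I a = 1 := by
  unfold cMarginal
  rw [← hP, ← Equiv.sum_comp (Equiv.piEquivPiSubtypeProd (fun i => i ∈ I) (fun _ => X)).symm P,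
    Fintype.sum_prod_type]
  rfl

lemma l1_le_two {ι : Type*} [Fintype ι] (M Q : ι → ℝ) (hM0 : ∀ i, 0 ≤ M i)
    (hQ0 : ∀ i, 0 ≤ Q i) (hM1 : ∑ i, M i = 1) (hQ1 : ∑ i, Q i = 1) :
    ∑ i, |M i - Q i| ≤ 2 := by
  calc ∑ i, |M i - Q i| ≤ ∑ i, (M i + Q i) := by
        refine Finset.sum_le_sum fun i _ => ?_
        have := hM0 i; have := hQ0 i
        rw [abs_le]; constructor <;> linarith
    _ = 2 := by rw [Finset.sum_add_distrib, hM1, hQ1]; norm_num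


lemma dupDist_nonneg (p : X → ℝ) (hp0 : ∀ x, 0 ≤ p x) (n : ℕ) (x : Fin n → X) :
    0 ≤ dupDist p n x := by
  refine Finset.prod_nonneg fun m _ => mul_nonneg (hp0 _) ?_
  split <;> norm_num

lemma cMarginal_dup_nonneg (p : X → ℝ) (hp0 : ∀ x, 0 ≤ p x) {n : ℕ} (I : Finset (Fin n))
    (a : {i : Fin n // i ∈ I} → X) : 0 ≤ cMarginal (dupDist p n) I a :=
  Finset.sum_nonneg fun f _ => dupDist_nonneg p hp0 n _

lemma sum_dupDist {n : ℕ} (hn : n % 2 = 0) (p : X → ℝ) (hp1 : ∑ x, p x = 1) :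
    ∑ x : Fin n → X, dupDist p n x = 1 := by
  have h : ∀ x : Fin n → X, dupDist p n x
      = ∑ g : Fin (n/2) → X, (∏ m, p (g m)) * (if x = dupFun hn g then 1 else 0) :=
    dupRepr hn p
  rw [Finset.sum_congr rfl fun x _ => h x, Finset.sum_comm]
  have h2 : ∀ g : Fin (n/2) → X,
      (∑ x : Fin n → X, (∏ m, p (g m)) * (if x = dupFun hn g then (1:ℝ) else 0))
      = ∏ m, p (g m) := by
    intro g
    rw [← Finset.mul_sum]
    simp
  rw [Finset.sum_congr rfl fun g _ => h2 g, sum_pi_prod p hp1]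

lemma cMarginal_dup_repr {n : ℕ} (hn : n % 2 = 0) (p : X → ℝ) (I : Finset (Fin n))
    (a : {i : Fin n // i ∈ I} → X) :
    cMarginal (dupDist p n) I a
      = ∑ g : Fin (n/2) → X, (∏ m, p (g m)) *
          (if ∀ i : {i : Fin n // i ∈ I}, g (halfF hn i.1) = a i then 1 else 0) := by
  unfold cMarginal
  have h : ∀ f : {i : Fin n // i ∉ I} → X,
      dupDist p n (fun i => if h : i ∈ I then a ⟨i, h⟩ else f ⟨i, h⟩)
        = ∑ g : Fin (n/2) → X, (∏ m, p (g m)) *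
            (if (fun i => if h : i ∈ I then a ⟨i, h⟩ else f ⟨i, h⟩) = dupFun hn g
              then 1 else 0) := fun f => dupRepr hn p _
  rw [Finset.sum_congr rfl fun f _ => h f, Finset.sum_comm]
  refine Finset.sum_congr rfl fun g _ => ?_
  rw [← Finset.mul_sum]
  congr 1
  rw [Finset.sum_eq_single (fun i : {i : Fin n // i ∉ I} => g (halfF hn i.1))]
  · have hcond : ((fun i => if h : i ∈ I then a ⟨i, h⟩
          else (fun i : {i : Fin n // i ∉ I} => g (halfF hn i.1)) ⟨i, h⟩) = dupFun hn g)
        ↔ ∀ i : {i : Fin n // i ∈ I}, g (halfF hn i.1) = a i := by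
      constructor
      · intro hx i
        have := congrFun hx i.1
        rw [dif_pos i.2] at this
        simp only [dupFun] at this
        exact this.symm
      · intro hall
        funext j
        by_cases hj : j ∈ I
        · rw [dif_pos hj]
          exact (hall ⟨j, hj⟩).symm
        · rw [dif_neg hj]
          rfl
    simp only [hcond]
  · intro f _ hne
    rw [if_neg]
    intro hx
    apply hne
    funext i
    have := congrFun hx i.1
    rw [dif_neg i.2] at this
    simpa [dupFun] using this
  · simp


lemma cMarginal_dup_good {n : ℕ} (hn : n % 2 = 0) (p : X → ℝ) (hp1 : ∑ x, p x = 1)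
    (I : Finset (Fin n)) (hI : ∀ i ∈ I, ∀ j ∈ I, i.val/2 = j.val/2 → i = j)
    (a : {i : Fin n // i ∈ I} → X) :
    cMarginal (dupDist p n) I a = cIID {i : Fin n // i ∈ I} p a := by
  rw [cMarginal_dup_repr hn p I a]
  have h1 : ∀ g : Fin (n/2) → X,
      (if ∀ i : {i : Fin n // i ∈ I}, g (halfF hn i.1) = a i then (1:ℝ) else 0)
        = ∏ i : {i : Fin n // i ∈ I}, (if g (halfF hn i.1) = a i then 1 else 0) := by
    intro g; rw [Finset.prod_boole]; simp
  have h2 : ∀ g : Fin (n/2) → X,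
      (∏ m, p (g m)) * ∏ i : {i : Fin n // i ∈ I}, (if g (halfF hn i.1) = a i then (1:ℝ) else 0)
      = ∏ m : Fin (n/2), (p (g m) *
          ∏ i ∈ Finset.univ.filter (fun i : {i : Fin n // i ∈ I} => halfF hn i.1 = m),
            (if g m = a i then (1:ℝ) else 0)) := by
    intro g
    rw [Finset.prod_mul_distrib]
    congr 1
    rw [← Finset.prod_fiberwise Finset.univ (fun i : {i : Fin n // i ∈ I} => halfF hn i.1)
      (fun i => if g (halfF hn i.1) = a i then (1:ℝ) else 0)]
    refine Finset.prod_congr rfl fun m _ => Finset.prod_congr rfl fun i hi => ?_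
    rw [(Finset.mem_filter.mp hi).2]
  rw [Finset.sum_congr rfl fun g _ => by rw [h1 g, h2 g]]
  rw [← Fintype.piFinset_univ,
    ← Finset.prod_univ_sum (fun _ : Fin (n/2) => (Finset.univ : Finset X))
      (fun m u => p u * ∏ i ∈ Finset.univ.filter
        (fun i : {i : Fin n // i ∈ I} => halfF hn i.1 = m), (if u = a i then (1:ℝ) else 0))]
  have h4 : ∀ m : Fin (n/2),
      (∑ u : X, p u * ∏ i ∈ Finset.univ.filter
          (fun i : {i : Fin n // i ∈ I} => halfF hn i.1 = m), (if u = a i then (1:ℝ) else 0))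
      = ∏ i ∈ Finset.univ.filter
          (fun i : {i : Fin n // i ∈ I} => halfF hn i.1 = m), p (a i) := by
    intro m
    set s := Finset.univ.filter (fun i : {i : Fin n // i ∈ I} => halfF hn i.1 = m) with hs
    have hcard : ∀ i ∈ s, ∀ j ∈ s, i = j := by
      intro i hi j hj
      have hi2 := (Finset.mem_filter.mp hi).2
      have hj2 := (Finset.mem_filter.mp hj).2
      have : (i.1).val / 2 = (j.1).val / 2 := by
        have := congrArg Fin.val (hi2.trans hj2.symm)
        simpa [halfF] using this
      exact Subtype.ext (hI i.1 i.2 j.1 j.2 this)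
    rcases s.eq_empty_or_nonempty with he | ⟨i0, hi0⟩
    · simp [he, hp1]
    · have hsing : s = {i0} := Finset.eq_singleton_iff_unique_mem.mpr
        ⟨hi0, fun j hj => hcard j hj i0 hi0⟩
      rw [hsing]
      simp only [Finset.prod_singleton, mul_ite, mul_one, mul_zero]
      rw [Finset.sum_ite_eq' Finset.univ (a i0) p]
      simp
  rw [Finset.prod_congr rfl fun m _ => h4 m]
  rw [Finset.prod_fiberwise Finset.univ (fun i : {i : Fin n // i ∈ I} => halfF hn i.1)
    (fun i => p (a i))]
  rfl


lemma posB_inj {n : ℕ} {m m' : Fin (n/2)} {b b' : Bool}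
    (h : posB m b = posB (n := n) m' b') : m = m' ∧ b = b' := by
  have hv : 2*m.val + (if b then 1 else 0) = 2*m'.val + (if b' then 1 else 0) :=
    congrArg Fin.val h
  cases b <;> cases b' <;> simp at hv <;>
    first
      | exact ⟨Fin.ext (by omega), rfl⟩
      | omega

lemma posB_val_div {n : ℕ} (m : Fin (n/2)) (b : Bool) : (posB (n := n) m b).val / 2 = m.val := by
  simp only [posB]
  cases b <;> simp <;> omega

lemma good_count {n : ℕ} (hn : n % 2 = 0) (k : ℕ) :
    (n/2).choose k * 2^k
      ≤ ((Finset.powersetCard k (Finset.univ : Finset (Fin n))).filter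
          (fun I => ∀ i ∈ I, ∀ j ∈ I, i.val/2 = j.val/2 → i = j)).card := by
  classical
  set D : Finset (Σ M : Finset (Fin (n/2)), ∀ a ∈ M, Bool) :=
    (Finset.powersetCard k (Finset.univ : Finset (Fin (n/2)))).sigma
      (fun M => M.pi (fun _ => (Finset.univ : Finset Bool))) with hD
  have hDcard : D.card = (n/2).choose k * 2^k := by
    rw [hD, Finset.card_sigma]
    have : ∀ M ∈ Finset.powersetCard k (Finset.univ : Finset (Fin (n/2))),
        (M.pi (fun _ => (Finset.univ : Finset Bool))).card = 2^k := by
      intro M hM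
      rw [Finset.card_pi, Finset.prod_const]
      rw [Finset.mem_powersetCard_univ.mp hM]
      norm_num
    rw [Finset.sum_congr rfl this, Finset.sum_const, Finset.card_powersetCard,
      Finset.card_univ, Fintype.card_fin, smul_eq_mul]
  rw [← hDcard]
  refine Finset.card_le_card_of_injOn
    (fun s => s.1.attach.image (fun m => posB m.1 (s.2 m.1 m.2))) ?_ ?_
  · rintro ⟨M, σ⟩ hs
    rw [hD] at hs
    simp only [Finset.mem_coe, Finset.mem_sigma, Finset.mem_powersetCard_univ] at hs
    rw [Finset.mem_coe, Finset.mem_filter]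
    constructor
    · rw [Finset.mem_powersetCard_univ]
      rw [Finset.card_image_of_injOn, Finset.card_attach, hs.1]
      intro u _ v _ huv
      exact Subtype.ext ((posB_inj huv).1)
    · intro i hi j hj hij
      simp only [Finset.mem_image, Finset.mem_attach, true_and] at hi hj
      obtain ⟨u, rfl⟩ := hi
      obtain ⟨v, rfl⟩ := hj
      rw [posB_val_div, posB_val_div] at hij
      have huv : u = v := Subtype.ext (Fin.ext hij)
      rw [huv]
  · rintro ⟨M, σ⟩ hs ⟨M', σ'⟩ ht heq
    simp only [Set.mem_setOf_eq] at heq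
    have hmem : ∀ (m : Fin (n/2)) (hm : m ∈ M), posB m (σ m hm) ∈
        M'.attach.image (fun m' => posB m'.1 (σ' m'.1 m'.2)) := by
      intro m hm
      rw [← heq]
      exact Finset.mem_image.mpr ⟨⟨m, hm⟩, Finset.mem_attach _ _, rfl⟩
    have hmem' : ∀ (m : Fin (n/2)) (hm : m ∈ M'), posB m (σ' m hm) ∈
        M.attach.image (fun m' => posB m'.1 (σ m'.1 m'.2)) := by
      intro m hm
      rw [heq]
      exact Finset.mem_image.mpr ⟨⟨m, hm⟩, Finset.mem_attach _ _, rfl⟩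
    have hMM : M = M' := by
      ext m
      constructor
      · intro hm
        obtain ⟨v, -, hv⟩ := Finset.mem_image.mp (hmem m hm)
        obtain ⟨h1, -⟩ := posB_inj hv
        rw [← h1]; exact v.2
      · intro hm
        obtain ⟨v, -, hv⟩ := Finset.mem_image.mp (hmem' m hm)
        obtain ⟨h1, -⟩ := posB_inj hv
        rw [← h1]; exact v.2
    subst hMM
    have hσ : σ = σ' := by
      funext m hm
      obtain ⟨v, -, hv⟩ := Finset.mem_image.mp ((hmem m hm))
      obtain ⟨h1, h2⟩ := posB_inj hv
      cases v with
      | mk v hv2 =>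
        simp only at h1 h2
        subst h1
        exact h2.symm
    rw [hσ]


lemma key_ineq (N : ℕ) : ∀ k : ℕ, k ≤ N →
    ((2*N).choose k : ℝ) * ∏ j ∈ Finset.Icc 1 k, ((2*N : ℝ) - 2*j)
      ≤ (N.choose k : ℝ) * 2^k * (2*N : ℝ)^k := by
  intro k
  induction k with
  | zero => intro _; simp
  | succ k ih =>
    intro hk1
    have hk : k ≤ N := by omega
    have IH := ih hk
    rw [Finset.prod_Icc_succ_top (by omega : 1 ≤ k+1)]
    have e1 : ((2*N).choose (k+1) : ℝ) * ((k:ℝ)+1) = ((2*N).choose k : ℝ) * (2*(N:ℝ) - k) := by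
      have h := Nat.choose_succ_right_eq (2*N) k
      have hc := congrArg (fun t : ℕ => (t : ℝ)) h
      push_cast [Nat.cast_sub (by omega : k ≤ 2*N)] at hc
      linarith
    have e2 : ((N).choose (k+1) : ℝ) * ((k:ℝ)+1) = ((N).choose k : ℝ) * ((N:ℝ) - k) := by
      have h := Nat.choose_succ_right_eq N k
      have hc := congrArg (fun t : ℕ => (t : ℝ)) h
      push_cast [Nat.cast_sub hk] at hc
      linarith
    set A := ((2*N).choose k : ℝ) with hA
    set A' := ((2*N).choose (k+1) : ℝ) with hA'
    set B := ((N).choose k : ℝ) with hB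
    set B' := ((N).choose (k+1) : ℝ) with hB'
    set Q := ∏ j ∈ Finset.Icc 1 k, ((2*N : ℝ) - 2*j) with hQdef
    have hkN : (k : ℝ) + 1 ≤ (N:ℝ) := by exact_mod_cast hk1
    have hQ : 0 ≤ Q := by
      refine Finset.prod_nonneg fun j hj => ?_
      have hj2 := (Finset.mem_Icc.mp hj).2
      have : (j:ℝ) ≤ (k:ℝ) := by exact_mod_cast hj2
      linarith
    have hA0 : 0 ≤ A := Nat.cast_nonneg _
    have hB0 : 0 ≤ B := Nat.cast_nonneg _
    have hc0 : 0 ≤ 2*(N:ℝ) - 2*((k:ℝ)+1) := by linarith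
    have hk10 : (0:ℝ) < (k:ℝ) + 1 := by positivity
    rw [← mul_le_mul_iff_of_pos_right hk10]
    have hcast : ((2*N : ℕ) : ℝ) = 2*(N:ℝ) := by push_cast; ring
    push_cast
    calc A' * (Q * (2*(N:ℝ) - 2*((k:ℝ)+1))) * ((k:ℝ)+1)
        = (A' * ((k:ℝ)+1)) * (Q * (2*(N:ℝ) - 2*((k:ℝ)+1))) := by ring
      _ = (A * (2*(N:ℝ) - k)) * (Q * (2*(N:ℝ) - 2*((k:ℝ)+1))) := by rw [e1]
      _ ≤ (A * (2*(N:ℝ))) * (Q * (2*(N:ℝ) - 2*((k:ℝ)+1))) := by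
          have h1 : A * (2*(N:ℝ) - k) ≤ A * (2*(N:ℝ)) :=
            mul_le_mul_of_nonneg_left (by linarith) hA0
          exact mul_le_mul_of_nonneg_right h1 (mul_nonneg hQ hc0)
      _ = (A * Q) * ((2*(N:ℝ)) * (2*(N:ℝ) - 2*((k:ℝ)+1))) := by ring
      _ ≤ (B * 2^k * (2*(N:ℝ))^k) * ((2*(N:ℝ)) * (2*(N:ℝ) - 2*((k:ℝ)+1))) := by
          refine mul_le_mul_of_nonneg_right ?_ ?_
          · exact_mod_cast IH
          · have h2 : (0:ℝ) ≤ 2*(N:ℝ) := by positivity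
            exact mul_nonneg h2 hc0
      _ ≤ (B * 2^k * (2*(N:ℝ))^k) * ((2*(N:ℝ)) * (2*((N:ℝ) - k))) := by
          refine mul_le_mul_of_nonneg_left ?_ ?_
          · refine mul_le_mul_of_nonneg_left (by linarith) (by positivity)
          · positivity
      _ = (B * ((N:ℝ) - k)) * (2^(k+1) * (2*(N:ℝ))^(k+1)) := by ring
      _ = (B' * ((k:ℝ)+1)) * (2^(k+1) * (2*(N:ℝ))^(k+1)) := by rw [e2]
      _ = B' * 2^(k+1) * (2*(N:ℝ))^(k+1) * ((k:ℝ)+1) := by ring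


lemma main_bound (p : X → ℝ) (hp0 : ∀ x, 0 ≤ p x) (hp1 : ∑ x, p x = 1)
    (k : ℕ) (n : ℕ) (hn : Even n) (hkn : 2 * k < n) :
    ((n.choose k : ℝ))⁻¹ *
        ∑ I ∈ Finset.powersetCard k (Finset.univ : Finset (Fin n)),
          (∑ a : {i : Fin n // i ∈ I} → X,
            |cMarginal (dupDist p n) I a - cIID {i : Fin n // i ∈ I} p a|)
      ≤ 2 * (1 - ∏ j ∈ Finset.Icc 1 k, (((n : ℝ) - 2 * j) / n)) := by
  have hn2 : n % 2 = 0 := Nat.even_iff.mp hn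
  have hn0 : 0 < n := by omega
  have hkN : k ≤ n / 2 := by omega
  set C := Finset.powersetCard k (Finset.univ : Finset (Fin n)) with hC
  have hCcard : C.card = n.choose k := by
    rw [hC, Finset.card_powersetCard, Finset.card_univ, Fintype.card_fin]
  set G := (C.filter (fun I => ∀ i ∈ I, ∀ j ∈ I, i.val/2 = j.val/2 → i = j)).card with hG
  -- term bound
  have hterm : ∀ I ∈ C, (∑ a : {i : Fin n // i ∈ I} → X,
      |cMarginal (dupDist p n) I a - cIID {i : Fin n // i ∈ I} p a|)
      ≤ (if (∀ i ∈ I, ∀ j ∈ I, i.val/2 = j.val/2 → i = j) then (0:ℝ) else 2) := by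
    intro I _
    by_cases hg : ∀ i ∈ I, ∀ j ∈ I, i.val/2 = j.val/2 → i = j
    · rw [if_pos hg]
      have heq := cMarginal_dup_good hn2 p hp1 I hg
      simp [heq]
    · rw [if_neg hg]
      exact l1_le_two _ _ (cMarginal_dup_nonneg p hp0 I)
        (cIID_nonneg p hp0)
        (sum_cMarginal _ I (sum_dupDist hn2 p hp1))
        (sum_cIID p hp1)
  have hsum : (∑ I ∈ C, ∑ a : {i : Fin n // i ∈ I} → X,
      |cMarginal (dupDist p n) I a - cIID {i : Fin n // i ∈ I} p a|)
      ≤ 2 * ((C.card : ℝ) - G) := by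
    calc (∑ I ∈ C, ∑ a : {i : Fin n // i ∈ I} → X,
        |cMarginal (dupDist p n) I a - cIID {i : Fin n // i ∈ I} p a|)
        ≤ ∑ I ∈ C, (if (∀ i ∈ I, ∀ j ∈ I, i.val/2 = j.val/2 → i = j) then (0:ℝ) else 2) :=
          Finset.sum_le_sum hterm
      _ = 2 * ((C.card : ℝ) - G) := by
          rw [Finset.sum_ite, Finset.sum_const, Finset.sum_const, nsmul_eq_mul, nsmul_eq_mul]
          have hsplit := Finset.card_filter_add_card_filter_not
            (s := C) (fun I => ∀ i ∈ I, ∀ j ∈ I, i.val/2 = j.val/2 → i = j)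
          have hneg : ((C.filter (fun I => ¬ ∀ i ∈ I, ∀ j ∈ I, i.val/2 = j.val/2 → i = j)).card : ℝ)
              = (C.card : ℝ) - G := by
            rw [hG]
            push_cast [← hsplit]
            ring
          rw [hneg]
          ring
  -- key count
  have hkey : (n.choose k : ℝ) * ∏ j ∈ Finset.Icc 1 k, (((n : ℝ) - 2 * j) / n) ≤ G := by
    have hNn : 2 * (n/2) = n := by omega
    have hprodsplit : ∏ j ∈ Finset.Icc 1 k, (((n : ℝ) - 2 * j) / n)
        = (∏ j ∈ Finset.Icc 1 k, ((n : ℝ) - 2 * j)) / (n:ℝ)^k := by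
      rw [Finset.prod_div_distrib, Finset.prod_const, Nat.card_Icc]
      norm_num
    have hkey2 := key_ineq (n/2) k hkN
    rw [hNn] at hkey2
    have hGc : ((n/2).choose k * 2^k : ℕ) ≤ G := good_count hn2 k
    have hGc' : ((n/2).choose k : ℝ) * 2^k ≤ (G:ℝ) := by exact_mod_cast hGc
    have hnpow : (0:ℝ) < (n:ℝ)^k := by positivity
    rw [hprodsplit]
    have hn' : ((n:ℕ):ℝ) = (n:ℝ) := rfl
    calc (n.choose k : ℝ) * ((∏ j ∈ Finset.Icc 1 k, ((n : ℝ) - 2 * j)) / (n:ℝ)^k)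
        = ((n.choose k : ℝ) * ∏ j ∈ Finset.Icc 1 k, ((n : ℝ) - 2 * j)) / (n:ℝ)^k := by ring
      _ ≤ (((n/2).choose k : ℝ) * 2^k * (n:ℝ)^k) / (n:ℝ)^k := by
          have h2N : 2*((n/2 : ℕ):ℝ) = (n:ℝ) := by
            have h3 := congrArg (fun t : ℕ => (t:ℝ)) hNn
            push_cast at h3
            linarith
          rw [h2N] at hkey2
          exact div_le_div_of_nonneg_right hkey2 hnpow.le
      _ = ((n/2).choose k : ℝ) * 2^k := by field_simp
      _ ≤ G := hGc'
  -- finish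
  have hchoose : 0 < (n.choose k : ℝ) := by
    have : 0 < n.choose k := Nat.choose_pos (by omega)
    exact_mod_cast this
  rw [inv_mul_le_iff₀ hchoose]
  rw [hCcard] at hsum
  nlinarith [hsum, hkey]


lemma bound_tendsto (k : ℕ) :
    Filter.Tendsto (fun n : ℕ => 2 * (1 - ∏ j ∈ Finset.Icc 1 k, (((n : ℝ) - 2 * j) / n)))
      Filter.atTop (nhds 0) := by
  have hfac : ∀ j : ℕ, Filter.Tendsto (fun n : ℕ => ((n : ℝ) - 2 * j) / n)
      Filter.atTop (nhds 1) := by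
    intro j
    have h1 : Filter.Tendsto (fun n : ℕ => (2 * (j:ℝ)) / n) Filter.atTop (nhds 0) :=
      Filter.Tendsto.div_atTop tendsto_const_nhds tendsto_natCast_atTop_atTop
    have h2 : Filter.Tendsto (fun n : ℕ => 1 - (2 * (j:ℝ)) / n) Filter.atTop (nhds 1) := by
      have h3 := Filter.Tendsto.const_sub (1:ℝ) h1
      simpa using h3
    refine h2.congr' ?_
    filter_upwards [Filter.eventually_ge_atTop 1] with n hn
    have hn0 : (n:ℝ) ≠ 0 := by positivity
    field_simp
  have hprod : Filter.Tendsto (fun n : ℕ => ∏ j ∈ Finset.Icc 1 k, (((n : ℝ) - 2 * j) / n))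
      Filter.atTop (nhds 1) := by
    have := tendsto_finset_prod (f := fun (j : ℕ) (n : ℕ) => ((n : ℝ) - 2 * j) / n)
      (x := Filter.atTop) (a := fun _ => (1:ℝ)) (Finset.Icc 1 k) (fun j _ => hfac j)
    simpa using this
  have : Filter.Tendsto (fun n : ℕ => 2 * (1 - ∏ j ∈ Finset.Icc 1 k, (((n : ℝ) - 2 * j) / n)))
      Filter.atTop (nhds (2 * (1 - 1))) :=
    (tendsto_const_nhds.sub hprod).const_mul 2
  simpa using this


end Aux

/-- For every fixed `k ≥ 1` and every even `n > 2k`, the average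
ℓ¹ distance between the size-`k` marginals of the duplicated distribution `p̃ₙ` and
`p^{×k}` is at most `2(1 − ∏_{j=1}^k (n−2j)/n)`; in particular it tends to `0` as
`n → ∞` along even `n`, so the duplicated source is weakly almost i.i.d. along `p`. -/
theorem dup_source_weakly_almost_iid
    {X : Type*} [Fintype X] [DecidableEq X]
    (p : X → ℝ) (hp0 : ∀ x, 0 ≤ p x) (hp1 : ∑ x, p x = 1)
    (k : ℕ) (hk : 1 ≤ k) :
    (∀ n : ℕ, Even n → 2 * k < n →
      ((n.choose k : ℝ))⁻¹ *
          ∑ I ∈ Finset.powersetCard k (Finset.univ : Finset (Fin n)),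
            (∑ a : {i : Fin n // i ∈ I} → X,
              |cMarginal (dupDist p n) I a - cIID {i : Fin n // i ∈ I} p a|)
        ≤ 2 * (1 - ∏ j ∈ Finset.Icc 1 k, (((n : ℝ) - 2 * j) / n))) ∧
    Filter.Tendsto
      (fun n : ℕ => ((n.choose k : ℝ))⁻¹ *
        ∑ I ∈ Finset.powersetCard k (Finset.univ : Finset (Fin n)),
          (∑ a : {i : Fin n // i ∈ I} → X,
            |cMarginal (dupDist p n) I a - cIID {i : Fin n // i ∈ I} p a|))
      (Filter.atTop ⊓ Filter.principal {n : ℕ | Even n}) (nhds 0) := by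
  refine ⟨fun n hn hkn => main_bound p hp0 hp1 k n hn hkn, ?_⟩
  refine tendsto_of_tendsto_of_tendsto_of_le_of_le' (g := fun _ => (0:ℝ))
    (h := fun n : ℕ => 2 * (1 - ∏ j ∈ Finset.Icc 1 k, (((n : ℝ) - 2 * j) / n)))
    tendsto_const_nhds ((bound_tendsto k).mono_left inf_le_left) ?_ ?_
  · refine Filter.Eventually.of_forall fun n => ?_
    refine mul_nonneg (by positivity) ?_
    exact Finset.sum_nonneg fun I _ => Finset.sum_nonneg fun a _ => abs_nonneg _
  · rw [Filter.eventually_inf_principal]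
    filter_upwards [Filter.eventually_gt_atTop (2*k)] with n hn hev
    exact main_bound p hp0 hp1 k n hev hn


end AlmostIID
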